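/- arXiv:math/0009236 — 3 statements merged into one kernel-verified Lean document; each statement's English description precedes it below -/
import Mathlib

section
/- With coface operators ∂⁰f(a_0,…,a_n)(g) = f(a_0 a_1, a_2,…,a_n)(g), ∂ⁿf(a_0,…,a_n)(g) = f((S⁻¹(g⁽⁰⁾)·a_n)a_0, a_1,…,a_{n−1})(g⁽¹⁾), and the cyclic operator T_n as above, one has T_n ∂⁰ = ∂ⁿ on C_H^{n−1}(A). -/
universe u

open Finset in
/-- A Hopf algebra over `k` presented in pointwise (Sweedler) form: for every
`h : H`, the comultiplication is `Δ h = ∑ i < len h, Δ₁ h i ⊗ Δ₂ h i`.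
Coalgebra identities that live in tensor powers of `H` are expressed in the
equivalent "separating" form, i.e. after applying an arbitrary multilinear map
with values in an arbitrary `k`-module. -/
structure SweedlerHopf (k : Type u) (H : Type u) [Field k] [Ring H] [Algebra k H] where
  len : H → ℕ
  Δ₁ : H → ℕ → H
  Δ₂ : H → ℕ → H
  ε : H →ₐ[k] k
  S : H →ₗ[k] H
  Sinv : H →ₗ[k] H
  S_Sinv : ∀ h, S (Sinv h) = h
  Sinv_S : ∀ h, Sinv (S h) = h
  counit_left : ∀ h : H, (∑ i ∈ range (len h), ε (Δ₁ h i) • Δ₂ h i) = h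
  counit_right : ∀ h : H, (∑ i ∈ range (len h), ε (Δ₂ h i) • Δ₁ h i) = h
  coassoc : ∀ (M : Type u) [AddCommGroup M] [Module k M]
      (φ : H →ₗ[k] H →ₗ[k] H →ₗ[k] M) (h : H),
      (∑ i ∈ range (len h), ∑ j ∈ range (len (Δ₁ h i)),
        φ (Δ₁ (Δ₁ h i) j) (Δ₂ (Δ₁ h i) j) (Δ₂ h i))
      = ∑ i ∈ range (len h), ∑ j ∈ range (len (Δ₂ h i)),
        φ (Δ₁ h i) (Δ₁ (Δ₂ h i) j) (Δ₂ (Δ₂ h i) j)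
  comul_mul : ∀ (M : Type u) [AddCommGroup M] [Module k M]
      (φ : H →ₗ[k] H →ₗ[k] M) (g h : H),
      (∑ i ∈ range (len (g * h)), φ (Δ₁ (g * h) i) (Δ₂ (g * h) i))
      = ∑ i ∈ range (len g), ∑ j ∈ range (len h),
          φ (Δ₁ g i * Δ₁ h j) (Δ₂ g i * Δ₂ h j)
  comul_one : ∀ (M : Type u) [AddCommGroup M] [Module k M]
      (φ : H →ₗ[k] H →ₗ[k] M),
      (∑ i ∈ range (len 1), φ (Δ₁ 1 i) (Δ₂ 1 i)) = φ 1 1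
  antipode_left : ∀ h : H, (∑ i ∈ range (len h), S (Δ₁ h i) * Δ₂ h i) = ε h • 1
  antipode_right : ∀ h : H, (∑ i ∈ range (len h), Δ₁ h i * S (Δ₂ h i)) = ε h • 1
  S_mul : ∀ g h : H, S (g * h) = S h * S g
  S_one : S 1 = 1
  comul_S : ∀ (M : Type u) [AddCommGroup M] [Module k M]
      (φ : H →ₗ[k] H →ₗ[k] M) (g : H),
      (∑ i ∈ range (len (S g)), φ (Δ₁ (S g) i) (Δ₂ (S g) i))
      = ∑ i ∈ range (len g), φ (S (Δ₂ g i)) (S (Δ₁ g i))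
  comul_Sinv : ∀ (M : Type u) [AddCommGroup M] [Module k M]
      (φ : H →ₗ[k] H →ₗ[k] M) (g : H),
      (∑ i ∈ range (len (Sinv g)), φ (Δ₁ (Sinv g) i) (Δ₂ (Sinv g) i))
      = ∑ i ∈ range (len g), φ (Sinv (Δ₂ g i)) (Sinv (Δ₁ g i))

open Finset in
/-- A left `H`-module algebra (`H`-algebra) over the Sweedler-presented Hopf
algebra `𝓗`: `h ⬝ (a b) = ∑ (h⁽⁰⁾ ⬝ a)(h⁽¹⁾ ⬝ b)` and `h ⬝ 1 = ε(h) 1`. -/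
structure SweedlerMA {k H : Type u} [Field k] [Ring H] [Algebra k H]
    (𝓗 : SweedlerHopf k H) (A : Type u) [Ring A] [Algebra k A] where
  act : H →ₗ[k] A →ₗ[k] A
  act_mul : ∀ (g h : H) (a : A), act (g * h) a = act g (act h a)
  act_one : ∀ a : A, act 1 a = a
  act_mul_distrib : ∀ (h : H) (a b : A),
      act h (a * b) = ∑ i ∈ range (𝓗.len h), act (𝓗.Δ₁ h i) a * act (𝓗.Δ₂ h i) b
  act_unit : ∀ h : H, act h 1 = 𝓗.ε h • 1

open Finset in
/-- Iterated Sweedler expansion: `Sexpand 𝓗 n h ψ` is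
`∑ ψ (h⁽⁰⁾, h⁽¹⁾, …, h⁽ⁿ⁾)` over the components of `Δ⁽ⁿ⁾ h`. -/
def Sexpand {k H : Type u} [Field k] [Ring H] [Algebra k H]
    (𝓗 : SweedlerHopf k H) {M : Type u} [AddCommMonoid M] :
    (n : ℕ) → H → ((Fin (n + 1) → H) → M) → M
  | 0, h, ψ => ψ (fun _ => h)
  | n + 1, h, ψ => ∑ i ∈ range (𝓗.len h),
      Sexpand 𝓗 n (𝓗.Δ₂ h i) (fun v => ψ (Fin.cons (𝓗.Δ₁ h i) v))

open Finset in
/-- `F : A^{⊗(n+1)} → F(H)` is an `H`-equivariant cochain: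
`(h ⬝ F)(a₀,…,aₙ)(g) = F(a₀,…,aₙ)(S(h⁽¹⁾) g h⁽⁰⁾)`, where
`(h ⬝ F)(a₀,…,aₙ)(g) = F(h⁽⁰⁾ ⬝ a₀,…,h⁽ⁿ⁾ ⬝ aₙ)(g)`. -/
def IsEquivCochain {k H A : Type u} [Field k] [Ring H] [Algebra k H]
    [Ring A] [Algebra k A] (𝓗 : SweedlerHopf k H) (MA : SweedlerMA 𝓗 A)
    (n : ℕ) (F : (Fin (n + 1) → A) → H → k) : Prop :=
  ∀ (h g : H) (a : Fin (n + 1) → A),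
    Sexpand 𝓗 n h (fun v => F (fun i => MA.act (v i) (a i)) g)
      = ∑ i ∈ range (𝓗.len h), F a (𝓗.S (𝓗.Δ₂ h i) * g * 𝓗.Δ₁ h i)

open Finset in
/-- The cyclic operator `Tₙ F (a₀,…,aₙ)(g) = F (S⁻¹(g⁽⁰⁾) ⬝ aₙ, a₀,…,aₙ₋₁)(g⁽¹⁾)`. -/
def cyclicT {k H A : Type u} [Field k] [Ring H] [Algebra k H]
    [Ring A] [Algebra k A] (𝓗 : SweedlerHopf k H) (MA : SweedlerMA 𝓗 A)
    (n : ℕ) (F : (Fin (n + 1) → A) → H → k) : (Fin (n + 1) → A) → H → k :=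
  fun a g => ∑ i ∈ range (𝓗.len g),
    F (Fin.cons (MA.act (𝓗.Sinv (𝓗.Δ₁ g i)) (a (Fin.last n)))
        (fun j : Fin n => a j.castSucc)) (𝓗.Δ₂ g i)

/-- The zeroth coface operator `∂⁰ : C^m → C^{m+1}`,
`∂⁰F(a₀,…,a_{m+1})(g) = F(a₀a₁, a₂,…,a_{m+1})(g)`. -/
def coface0 {k H A : Type u} [Field k] [Ring H] [Algebra k H]
    [Ring A] [Algebra k A] (m : ℕ) (F : (Fin (m + 1) → A) → H → k) :
    (Fin (m + 2) → A) → H → k :=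
  fun a g => F (Fin.cons (a 0 * a 1) (fun j : Fin m => a j.succ.succ)) g

open Finset in
/-- The last coface operator `∂^{m+1} : C^m → C^{m+1}`,
`∂^{m+1}F(a₀,…,a_{m+1})(g) = F((S⁻¹(g⁽⁰⁾) ⬝ a_{m+1}) a₀, a₁,…,a_m)(g⁽¹⁾)`. -/
def cofaceLast {k H A : Type u} [Field k] [Ring H] [Algebra k H]
    [Ring A] [Algebra k A] (𝓗 : SweedlerHopf k H) (MA : SweedlerMA 𝓗 A)
    (m : ℕ) (F : (Fin (m + 1) → A) → H → k) : (Fin (m + 2) → A) → H → k :=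
  fun a g => ∑ i ∈ range (𝓗.len g),
    F (Fin.cons (MA.act (𝓗.Sinv (𝓗.Δ₁ g i)) (a (Fin.last (m + 1))) * a 0)
        (fun j : Fin m => a j.succ.castSucc)) (𝓗.Δ₂ g i)

/-- On `C_H^{m}(A)` (i.e. `C_H^{n-1}` with `n = m+1`) one has
`Tₙ ∂⁰ = ∂ⁿ`. -/
theorem cyclicT_coface0 {k H A : Type u} [Field k] [CharZero k]
    [Ring H] [Algebra k H] [Ring A] [Algebra k A]
    (𝓗 : SweedlerHopf k H) (MA : SweedlerMA 𝓗 A) (m : ℕ)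
    (f : MultilinearMap k (fun _ : Fin (m + 1) => A) (H →ₗ[k] k))
    (hf : IsEquivCochain 𝓗 MA m (fun a g => f a g)) :
    ∀ (a : Fin (m + 2) → A) (g : H),
      cyclicT 𝓗 MA (m + 1) (coface0 m (fun a g => f a g)) a g
        = cofaceLast 𝓗 MA m (fun a g => f a g) a g := by
  intro a g
  simp only [cyclicT, coface0, cofaceLast]
  refine Finset.sum_congr rfl fun i _ => ?_
  rfl
end

section
/- Under the isomorphism β(a ⊗ u) = a₍₀₎ ⊗ a₍₁₎u, the generalized trace map Ψⁿf(a_0⊗u_0,…,a_n⊗u_n)(g) = f(a_{0〈0〉},…,a_{n〈0〉})(g⁽¹⁾)·tr(S(a_{0〈1〉})u_0 S(a_{1〈1〉})u_1 ⋯ S(a_{n〈1〉})u_n g⁽⁰⁾) transforms to the simple trace map: (Ψⁿ ∘ β^{⊗(n+1)})f(a_0⊗u_0,…,a_n⊗u_n)(g) = f(a_0,…,a_n)(g⁽¹⁾)·tr(u_0 u_1 ⋯ u_n g⁽⁰⁾). -/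
universe u

open Finset in
/-- A Yetter-Drinfeld `H`-algebra: a left `H`-module algebra which is a right
`H^{op}`-comodule algebra (coaction presented pointwise as
`ρ a = ∑ j < ρlen a, ρA a j ⊗ ρH a j`) satisfying the Yetter-Drinfeld
compatibility condition. -/
structure SweedlerYD {k H : Type u} [Field k] [Ring H] [Algebra k H]
    (𝓗 : SweedlerHopf k H) (A : Type u) [Ring A] [Algebra k A]
    extends SweedlerMA 𝓗 A where
  ρlen : A → ℕ
  ρA : A → ℕ → A
  ρH : A → ℕ → H
  ρ_counit : ∀ a : A, (∑ j ∈ range (ρlen a), 𝓗.ε (ρH a j) • ρA a j) = a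
  ρ_coassoc : ∀ (M : Type u) [AddCommGroup M] [Module k M]
      (φ : A →ₗ[k] H →ₗ[k] H →ₗ[k] M) (a : A),
      (∑ j ∈ range (ρlen a), ∑ l ∈ range (ρlen (ρA a j)),
        φ (ρA (ρA a j) l) (ρH (ρA a j) l) (ρH a j))
      = ∑ j ∈ range (ρlen a), ∑ l ∈ range (𝓗.len (ρH a j)),
          φ (ρA a j) (𝓗.Δ₁ (ρH a j) l) (𝓗.Δ₂ (ρH a j) l)
  ρ_mul : ∀ (M : Type u) [AddCommGroup M] [Module k M]
      (φ : A →ₗ[k] H →ₗ[k] M) (a b : A),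
      (∑ j ∈ range (ρlen (a * b)), φ (ρA (a * b) j) (ρH (a * b) j))
      = ∑ j ∈ range (ρlen a), ∑ l ∈ range (ρlen b),
          φ (ρA a j * ρA b l) (ρH b l * ρH a j)
  ρ_one : ∀ (M : Type u) [AddCommGroup M] [Module k M]
      (φ : A →ₗ[k] H →ₗ[k] M),
      (∑ j ∈ range (ρlen (1 : A)), φ (ρA 1 j) (ρH 1 j)) = φ 1 1
  yd : ∀ (M : Type u) [AddCommGroup M] [Module k M]
      (φ : A →ₗ[k] H →ₗ[k] M) (h : H) (a : A),
      (∑ i ∈ range (𝓗.len h), ∑ j ∈ range (ρlen (act (𝓗.Δ₂ h i) a)),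
        φ (ρA (act (𝓗.Δ₂ h i) a) j) (ρH (act (𝓗.Δ₂ h i) a) j * 𝓗.Δ₁ h i))
      = ∑ i ∈ range (𝓗.len h), ∑ j ∈ range (ρlen a),
          φ (act (𝓗.Δ₁ h i) (ρA a j)) (𝓗.Δ₂ h i * ρH a j)

open Finset in
/-- Simultaneous Sweedler expansion of the coaction on a tuple of elements of
the Yetter-Drinfeld algebra `A`:
`coexpand Y n a ψ = ∑ ψ ((a₀)₍₀₎,…) ((a₀)₍₁₎,…)` over all coaction components. -/
def coexpand {k H A : Type u} [Field k] [Ring H] [Algebra k H]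
    [Ring A] [Algebra k A] {𝓗 : SweedlerHopf k H} (Y : SweedlerYD 𝓗 A)
    {M : Type u} [AddCommMonoid M] :
    (n : ℕ) → (Fin n → A) → ((Fin n → A) → (Fin n → H) → M) → M
  | 0, _, ψ => ψ Fin.elim0 Fin.elim0
  | n + 1, a, ψ => ∑ j ∈ range (Y.ρlen (a 0)),
      coexpand Y n (fun i => a i.succ)
        (fun as hs => ψ (Fin.cons (Y.ρA (a 0) j) as) (Fin.cons (Y.ρH (a 0) j) hs))

open Finset in
/-- The generalized (equivariant) trace map `Ψⁿ` of Proposition 5.2: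
`Ψⁿf(a₀⊗u₀,…,aₙ⊗uₙ)(g) = f(a₀₍₀₎,…,aₙ₍₀₎)(g⁽¹⁾) ·
  tr(S(a₀₍₁₎)u₀ S(a₁₍₁₎)u₁ ⋯ S(aₙ₍₁₎)uₙ g⁽⁰⁾)`. -/
noncomputable def PsiMap {k H A V : Type u} [Field k] [Ring H] [Algebra k H]
    [Ring A] [Algebra k A] [AddCommGroup V] [Module k V]
    (𝓗 : SweedlerHopf k H) (Y : SweedlerYD 𝓗 A)
    (r : H →ₐ[k] Module.End k V) (n : ℕ)
    (f : MultilinearMap k (fun _ : Fin (n + 1) => A) (H →ₗ[k] k))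
    (a : Fin (n + 1) → A) (u : Fin (n + 1) → Module.End k V) (g : H) : k :=
  ∑ i ∈ range (𝓗.len g), coexpand Y (n + 1) a (fun as hs =>
    f as (𝓗.Δ₂ g i) *
      LinearMap.trace k V
        ((List.ofFn (fun l : Fin (n + 1) => r (𝓗.S (hs l)) * u l)).prod * r (𝓗.Δ₁ g i)))


section Aux

open Finset

variable {k H A : Type u} [Field k] [Ring H] [Algebra k H]
    [Ring A] [Algebra k A] {𝓗 : SweedlerHopf k H} (Y : SweedlerYD 𝓗 A)
    {M : Type u} [AddCommGroup M] [Module k M]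


lemma cons_update_free {β : Type u} {n : ℕ} [DecidableEq (Fin n)]
    [DecidableEq (Fin (n + 1))] (x : β) (p : Fin n → β) (i : Fin n) (y : β) :
    (Fin.cons x (Function.update p i y) : Fin (n + 1) → β)
      = Function.update (Fin.cons x p : Fin (n + 1) → β) i.succ y := by
  funext j
  refine Fin.cases ?_ (fun l => ?_) j
  · rw [Fin.cons_zero, Function.update_of_ne (Fin.succ_ne_zero i).symm, Fin.cons_zero]
  · rw [Fin.cons_succ]
    rcases eq_or_ne l i with rfl | hl
    · rw [Function.update_self, Function.update_self]
    · rw [Function.update_of_ne hl,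
        Function.update_of_ne (fun hc => hl (Fin.succ_injective _ hc)), Fin.cons_succ]

lemma coexpand_sum {ι : Type} (s : Finset ι) :
    ∀ (n : ℕ) (a : Fin n → A) (ψ : ι → (Fin n → A) → (Fin n → H) → M),
      coexpand Y n a (fun as hs => ∑ i ∈ s, ψ i as hs)
        = ∑ i ∈ s, coexpand Y n a (ψ i)
  | 0, a, ψ => rfl
  | n + 1, a, ψ => by
      simp only [coexpand]
      rw [Finset.sum_comm]
      exact Finset.sum_congr rfl fun j _ => coexpand_sum s n (fun i => a i.succ)
        (fun i as hs => ψ i (Fin.cons (Y.ρA (a 0) j) as) (Fin.cons (Y.ρH (a 0) j) hs))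

lemma collapse1 (Φ : A →ₗ[k] H →ₗ[k] M) (a0 : A) :
    (∑ j ∈ range (Y.ρlen a0), ∑ j' ∈ range (Y.ρlen (Y.ρA a0 j)),
        Φ (Y.ρA (Y.ρA a0 j) j') (𝓗.S (Y.ρH (Y.ρA a0 j) j') * Y.ρH a0 j))
      = Φ a0 1 := by
  let φ : A →ₗ[k] H →ₗ[k] H →ₗ[k] M :=
    { toFun := fun b =>
        { toFun := fun x =>
            { toFun := fun y => Φ b (𝓗.S x * y)
              map_add' := fun y y' => by
                show Φ b (𝓗.S x * (y + y')) = _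
                rw [mul_add, map_add]
              map_smul' := fun c y => by
                show Φ b (𝓗.S x * c • y) = _
                rw [mul_smul_comm, map_smul]; rfl }
          map_add' := fun x x' => by
            ext y; simp [map_add, add_mul]
          map_smul' := fun c x => by
            ext y; simp [smul_mul_assoc] }
      map_add' := fun b b' => by ext x y; simp
      map_smul' := fun c b => by ext x y; simp }
  have h1 := Y.ρ_coassoc M φ a0
  simp only [φ, LinearMap.coe_mk, AddHom.coe_mk] at h1
  rw [h1]
  have h2 : ∀ j, (∑ l ∈ range (𝓗.len (Y.ρH a0 j)),
      Φ (Y.ρA a0 j) (𝓗.S (𝓗.Δ₁ (Y.ρH a0 j) l) * 𝓗.Δ₂ (Y.ρH a0 j) l))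
      = Φ (𝓗.ε (Y.ρH a0 j) • Y.ρA a0 j) 1 := by
    intro j
    rw [← map_sum, 𝓗.antipode_left, map_smul, map_smul, LinearMap.smul_apply]
  rw [Finset.sum_congr rfl fun j _ => h2 j, ← LinearMap.sum_apply, ← map_sum,
    Y.ρ_counit]

/-- Fixing the first coordinates of a doubly multilinear map. -/
def tailF {n : ℕ}
    (F : MultilinearMap k (fun _ : Fin (n + 1) => A)
          (MultilinearMap k (fun _ : Fin (n + 1) => H) M)) (b : A) (h : H) :
    MultilinearMap k (fun _ : Fin n => A)
      (MultilinearMap k (fun _ : Fin n => H) M) where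
  toFun as :=
    { toFun := fun hs => F (Fin.cons b as) (Fin.cons h hs)
      map_update_add' := fun hs i x y => by
        simp only [cons_update_free, MultilinearMap.map_update_add]
      map_update_smul' := fun hs i c x => by
        simp only [cons_update_free, MultilinearMap.map_update_smul] }
  map_update_add' as i x y := by
    ext hs
    simp only [cons_update_free, F.map_update_add, MultilinearMap.add_apply,
      MultilinearMap.coe_mk]
  map_update_smul' as i c x := by
    ext hs
    simp only [cons_update_free, F.map_update_smul, MultilinearMap.smul_apply,
      MultilinearMap.coe_mk]

/-- The bilinear map `b ↦ h ↦ F (b, a₁, …) (h, 1, …)`. -/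
def PhiOf {n : ℕ}
    (F : MultilinearMap k (fun _ : Fin (n + 1) => A)
          (MultilinearMap k (fun _ : Fin (n + 1) => H) M)) (t : Fin n → A) :
    A →ₗ[k] H →ₗ[k] M where
  toFun b :=
    { toFun := fun h => F (Fin.cons b t) (Fin.cons h fun _ => 1)
      map_add' := fun x y => by
        show F (Fin.cons b t) (Fin.cons (x + y) fun _ => 1) = _
        rw [MultilinearMap.cons_add]
      map_smul' := fun c x => by
        show F (Fin.cons b t) (Fin.cons (c • x) fun _ => 1) = _
        rw [MultilinearMap.cons_smul]; rfl }
  map_add' b b' := by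
    ext h
    simp [MultilinearMap.cons_add]
  map_smul' c b := by
    ext h
    simp [MultilinearMap.cons_smul]

lemma collapse : ∀ (n : ℕ)
    (F : MultilinearMap k (fun _ : Fin n => A)
          (MultilinearMap k (fun _ : Fin n => H) M))
    (a : Fin n → A),
    coexpand Y n a (fun as hs => coexpand Y n as
      (fun as' hs' => F as' (fun l => 𝓗.S (hs' l) * hs l)))
    = F a (fun _ => 1)
  | 0, F, a => by
    simp only [coexpand]
    rw [Subsingleton.elim (Fin.elim0 : Fin 0 → A) a,
      Subsingleton.elim (fun l : Fin 0 => 𝓗.S (Fin.elim0 l) * Fin.elim0 l)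
        (fun _ : Fin 0 => (1 : H))]
  | n + 1, F, a => by
    simp only [coexpand, Fin.cons_zero, Fin.cons_succ]
    have key : ∀ (b : A) (x y : H),
        coexpand Y n (fun i => a i.succ) (fun as hs => coexpand Y n as
          (fun as' hs' => F (Fin.cons b as')
            (fun l => 𝓗.S ((Fin.cons x hs' : Fin (n + 1) → H) l) * (Fin.cons y hs : Fin (n + 1) → H) l)))
        = F (Fin.cons b (fun i => a i.succ))
            (Fin.cons (𝓗.S x * y) fun _ => 1) := by
      intro b x y
      have e : ∀ (hs' hs : Fin n → H),
          (fun l => 𝓗.S ((Fin.cons x hs' : Fin (n + 1) → H) l) * (Fin.cons y hs : Fin (n + 1) → H) l)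
          = (Fin.cons (𝓗.S x * y) (fun l => 𝓗.S (hs' l) * hs l) : Fin (n + 1) → H) := by
        intro hs' hs
        funext l
        refine Fin.cases ?_ ?_ l <;> simp
      simp only [e]
      exact collapse n (tailF F b (𝓗.S x * y)) (fun i => a i.succ)
    calc
      ∑ j ∈ range (Y.ρlen (a 0)), coexpand Y n (fun i => a i.succ)
          (fun as hs => ∑ j' ∈ range (Y.ρlen (Y.ρA (a 0) j)),
            coexpand Y n as (fun as' hs' =>
              F (Fin.cons (Y.ρA (Y.ρA (a 0) j) j') as')
                (fun l => 𝓗.S ((Fin.cons (Y.ρH (Y.ρA (a 0) j) j') hs' : Fin (n + 1) → H) l) *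
                  (Fin.cons (Y.ρH (a 0) j) hs : Fin (n + 1) → H) l)))
        = ∑ j ∈ range (Y.ρlen (a 0)), ∑ j' ∈ range (Y.ρlen (Y.ρA (a 0) j)),
            PhiOf F (fun i => a i.succ) (Y.ρA (Y.ρA (a 0) j) j')
              (𝓗.S (Y.ρH (Y.ρA (a 0) j) j') * Y.ρH (a 0) j) := by
          refine Finset.sum_congr rfl fun j _ => ?_
          rw [coexpand_sum]
          exact Finset.sum_congr rfl fun j' _ => key _ _ _
      _ = PhiOf F (fun i => a i.succ) (a 0) 1 := collapse1 Y _ _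
      _ = F a fun _ => 1 := by
          show F (Fin.cons (a 0) fun i => a i.succ) (Fin.cons 1 fun _ => 1) = _
          have e1 : (Fin.cons (a 0) (fun i => a i.succ) : Fin (n + 1) → A) = a := by
            funext j
            refine Fin.cases ?_ ?_ j <;> simp
          have e2 : (Fin.cons 1 (fun _ => 1) : Fin (n + 1) → H) = fun _ => 1 := by
            funext j
            refine Fin.cases ?_ ?_ j <;> simp
          rw [e1, e2]

end Aux

/-- The simple trace map as a doubly multilinear map. -/
noncomputable def Gmap {k H A V : Type u} [Field k] [Ring H] [Algebra k H]
    [Ring A] [Algebra k A] [AddCommGroup V] [Module k V]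
    (r : H →ₐ[k] Module.End k V) (n : ℕ)
    (f : MultilinearMap k (fun _ : Fin (n + 1) => A) (H →ₗ[k] k))
    (u : Fin (n + 1) → Module.End k V) (c w : H) :
    MultilinearMap k (fun _ : Fin (n + 1) => A)
      (MultilinearMap k (fun _ : Fin (n + 1) => H) k) :=
  (LinearMap.toSpanSingleton k _
      (((LinearMap.trace k V) ∘ₗ (LinearMap.mulRight k (r w))).compMultilinearMap
        ((MultilinearMap.mkPiAlgebraFin k (n + 1)
            (Module.End k V)).compLinearMap
          (fun l => (LinearMap.mulRight k (u l)) ∘ₗ r.toLinearMap)))).compMultilinearMap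
    ((LinearMap.applyₗ c).compMultilinearMap f)

lemma Gmap_apply {k H A V : Type u} [Field k] [Ring H] [Algebra k H]
    [Ring A] [Algebra k A] [AddCommGroup V] [Module k V]
    (r : H →ₐ[k] Module.End k V) (n : ℕ)
    (f : MultilinearMap k (fun _ : Fin (n + 1) => A) (H →ₗ[k] k))
    (u : Fin (n + 1) → Module.End k V) (c w : H)
    (as : Fin (n + 1) → A) (hs : Fin (n + 1) → H) :
    Gmap r n f u c w as hs
      = f as c * LinearMap.trace k V
          ((List.ofFn (fun l : Fin (n + 1) => r (hs l) * u l)).prod * r w) := by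
  simp [Gmap, LinearMap.compMultilinearMap_apply,
    MultilinearMap.compLinearMap_apply, MultilinearMap.mkPiAlgebraFin_apply,
    LinearMap.toSpanSingleton_apply, smul_eq_mul, LinearMap.applyₗ,
    MultilinearMap.smul_apply, LinearMap.mulRight_apply]
  left; rfl

open Finset in
/-- Under the isomorphism `β(a ⊗ u) = a₍₀₎ ⊗ a₍₁₎ u`, the
generalized trace map `Ψⁿ` transforms to the simple trace map:
`(Ψⁿ ∘ β^{⊗(n+1)}) f (a₀⊗u₀,…,aₙ⊗uₙ)(g) = f(a₀,…,aₙ)(g⁽¹⁾) · tr(u₀ ⋯ uₙ g⁽⁰⁾)`. -/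
theorem psi_beta_eq_simple_trace {k H A V : Type u} [Field k] [CharZero k]
    [Ring H] [Algebra k H] [Ring A] [Algebra k A]
    [AddCommGroup V] [Module k V] [FiniteDimensional k V]
    (𝓗 : SweedlerHopf k H) (Y : SweedlerYD 𝓗 A)
    (r : H →ₐ[k] Module.End k V) (n : ℕ)
    (f : MultilinearMap k (fun _ : Fin (n + 1) => A) (H →ₗ[k] k))
    (a : Fin (n + 1) → A) (u : Fin (n + 1) → Module.End k V) (g : H) :
    coexpand Y (n + 1) a
      (fun as hs => PsiMap 𝓗 Y r n f as (fun l => r (hs l) * u l) g)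
    = ∑ i ∈ range (𝓗.len g),
        f a (𝓗.Δ₂ g i) *
          LinearMap.trace k V ((List.ofFn u).prod * r (𝓗.Δ₁ g i)) := by
  classical
  have unf : (fun (as : Fin (n + 1) → A) (hs : Fin (n + 1) → H) =>
        PsiMap 𝓗 Y r n f as (fun l => r (hs l) * u l) g)
      = fun as hs => ∑ i ∈ range (𝓗.len g), coexpand Y (n + 1) as
          (fun as' hs' => Gmap r n f u (𝓗.Δ₂ g i) (𝓗.Δ₁ g i) as'
            (fun l => 𝓗.S (hs' l) * hs l)) := by
    funext as hs
    simp only [PsiMap]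
    refine Finset.sum_congr rfl fun i _ => ?_
    congr 1
    funext as' hs'
    rw [Gmap_apply]
    have e2 : (fun l : Fin (n + 1) => r (𝓗.S (hs' l) * hs l) * u l)
        = fun l => r (𝓗.S (hs' l)) * (r (hs l) * u l) := by
      funext l
      rw [map_mul, mul_assoc]
    rw [e2]
  rw [unf, coexpand_sum]
  refine Finset.sum_congr rfl fun i _ => ?_
  rw [collapse Y (n + 1) (Gmap r n f u (𝓗.Δ₂ g i) (𝓗.Δ₁ g i)) a, Gmap_apply]
  simp
end

section
/- The quantum monopole projector e_q = (1/2)[[1 + q⁻²b, qa],[q⁻¹a*, 1 − b]] ∈ M₂(S²_q) is an idempotent: e_q² = e_q. -/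
noncomputable section

/-- The defining relations of the Podleś equator quantum sphere `S²_q`:
the free `ℂ`-algebra on generators `a` (index `0`), `a*` (index `1`) and `b`
(index `2`), subject to `a a* + q⁻⁴ b² = 1`, `a* a + b² = 1`, `a b = q⁻² b a`
and `a* b = q² b a*`. -/
inductive PodlesRel (q : ℂ) :
    FreeAlgebra ℂ (Fin 3) → FreeAlgebra ℂ (Fin 3) → Prop
  | rel1 : PodlesRel q
      (FreeAlgebra.ι ℂ (0 : Fin 3) * FreeAlgebra.ι ℂ (1 : Fin 3)
        + (q ^ 4)⁻¹ • (FreeAlgebra.ι ℂ (2 : Fin 3) * FreeAlgebra.ι ℂ (2 : Fin 3))) 1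
  | rel2 : PodlesRel q
      (FreeAlgebra.ι ℂ (1 : Fin 3) * FreeAlgebra.ι ℂ (0 : Fin 3)
        + FreeAlgebra.ι ℂ (2 : Fin 3) * FreeAlgebra.ι ℂ (2 : Fin 3)) 1
  | rel3 : PodlesRel q
      (FreeAlgebra.ι ℂ (0 : Fin 3) * FreeAlgebra.ι ℂ (2 : Fin 3))
      ((q ^ 2)⁻¹ • (FreeAlgebra.ι ℂ (2 : Fin 3) * FreeAlgebra.ι ℂ (0 : Fin 3)))
  | rel4 : PodlesRel q
      (FreeAlgebra.ι ℂ (1 : Fin 3) * FreeAlgebra.ι ℂ (2 : Fin 3))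
      ((q ^ 2) • (FreeAlgebra.ι ℂ (2 : Fin 3) * FreeAlgebra.ι ℂ (1 : Fin 3)))

/-- The Podleś equator quantum sphere `S²_q`. -/
abbrev PodlesSphere (q : ℂ) := RingQuot (PodlesRel q)

/-- The generator `a` of `S²_q`. -/
def pa (q : ℂ) : PodlesSphere q :=
  RingQuot.mkAlgHom ℂ (PodlesRel q) (FreeAlgebra.ι ℂ (0 : Fin 3))

/-- The generator `a*` of `S²_q`. -/
def pastar (q : ℂ) : PodlesSphere q :=
  RingQuot.mkAlgHom ℂ (PodlesRel q) (FreeAlgebra.ι ℂ (1 : Fin 3))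

/-- The generator `b` of `S²_q`. -/
def pb (q : ℂ) : PodlesSphere q :=
  RingQuot.mkAlgHom ℂ (PodlesRel q) (FreeAlgebra.ι ℂ (2 : Fin 3))

/-- The quantum monopole projector
`e_q = (1/2) [[1 + q⁻² b, q a], [q⁻¹ a*, 1 - b]] ∈ M₂(S²_q)`. -/
def monopole (q : ℂ) : Matrix (Fin 2) (Fin 2) (PodlesSphere q) :=
  !![(2 : ℂ)⁻¹ • (1 + (q ^ 2)⁻¹ • pb q), (2 : ℂ)⁻¹ • (q • pa q);
     (2 : ℂ)⁻¹ • (q⁻¹ • pastar q), (2 : ℂ)⁻¹ • (1 - pb q)]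

end

lemma prel1 (q : ℂ) : pa q * pastar q + (q ^ 4)⁻¹ • (pb q * pb q) = 1 := by
  have := RingQuot.mkAlgHom_rel ℂ (PodlesRel.rel1 (q := q))
  simpa [pa, pastar, pb, map_add, map_mul, map_smul] using this

lemma prel2 (q : ℂ) : pastar q * pa q + pb q * pb q = 1 := by
  have := RingQuot.mkAlgHom_rel ℂ (PodlesRel.rel2 (q := q))
  simpa [pa, pastar, pb, map_add, map_mul] using this

lemma prel3 (q : ℂ) : pa q * pb q = (q ^ 2)⁻¹ • (pb q * pa q) := by
  have := RingQuot.mkAlgHom_rel ℂ (PodlesRel.rel3 (q := q))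
  simpa [pa, pb, map_mul, map_smul] using this

lemma prel4 (q : ℂ) : pastar q * pb q = (q ^ 2) • (pb q * pastar q) := by
  have := RingQuot.mkAlgHom_rel ℂ (PodlesRel.rel4 (q := q))
  simpa [pastar, pb, map_mul, map_smul] using this

set_option maxHeartbeats 1600000 in
/-- The quantum monopole projector
`e_q = (1/2)[[1 + q⁻²b, qa],[q⁻¹a*, 1 − b]] ∈ M₂(S²_q)` is an idempotent. -/
theorem monopole_idempotent (q : ℂ) (hq : q ≠ 0) :
    monopole q * monopole q = monopole q := by
  have h1 : pa q * pastar q = 1 - (q ^ 4)⁻¹ • (pb q * pb q) := by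
    have := prel1 q; linear_combination (norm := module) this
  have h2 : pastar q * pa q = 1 - pb q * pb q := by
    have := prel2 q; linear_combination (norm := module) this
  rw [monopole, Matrix.mul_fin_two]
  ext i j
  fin_cases i <;> fin_cases j
  all_goals
    simp only [Matrix.cons_val', Matrix.cons_val_zero, Matrix.cons_val_one, Matrix.head_cons,
      Matrix.empty_val', Matrix.cons_val_fin_one, Matrix.head_fin_const, Matrix.of_apply,
      Fin.zero_eta, Fin.mk_one, Fin.isValue,
      smul_add, smul_sub, smul_smul, mul_smul_comm, smul_mul_assoc, mul_add, add_mul,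
      sub_mul, mul_sub, mul_one, one_mul, h1, h2, prel3, prel4]
    match_scalars <;> (field_simp; try ring) <;> rw [← mul_pow, mul_inv_cancel₀ hq, one_pow]
end
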